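/- For an infinite cardinal κ, every (<κ)-inseparable set of vertices in a graph G contains the branch vertices of a subdivision of the complete graph K_κ contained in G. -/

import Mathlib

open Set

universe u

/-- A separation of a graph `G`: a pair of vertex sets covering `V` with no
edge between `A \ B` and `B \ A`. -/
structure Separation {V : Type u} (G : SimpleGraph V) where
  A : Set V
  B : Set V
  union_eq : A ∪ B = Set.univ
  no_edge : ∀ a ∈ A \ B, ∀ b ∈ B \ A, ¬ G.Adj a b

/-- The oriented separations of finite order. -/
abbrev FinSep {V : Type u} (G : SimpleGraph V) := {s : Separation G // (s.A ∩ s.B).Finite}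

/-- The separation topology: basic open sets prescribe the restriction of a
separation to a finite vertex set `Z`. -/
instance sepTop {V : Type u} (G : SimpleGraph V) : TopologicalSpace (FinSep G) :=
  TopologicalSpace.generateFrom
    {O | ∃ Z AZ BZ : Set V, Z.Finite ∧
      O = {s : FinSep G | s.1.A ∩ Z = AZ ∧ s.1.B ∩ Z = BZ}}

/-- The reverse orientation of a finite-order separation. -/
def FinSep.rev {V : Type u} {G : SimpleGraph V} (s : FinSep G) : FinSep G :=
  ⟨⟨s.1.B, s.1.A, by rw [Set.union_comm]; exact s.1.union_eq,
    fun a ha b hb h => s.1.no_edge b hb a ha h.symm⟩,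
   by rw [Set.inter_comm]; exact s.2⟩

/-- A ray in a graph: an injective sequence of successively adjacent vertices. -/
structure GraphRay {V : Type u} (G : SimpleGraph V) where
  f : ℕ → V
  inj : Function.Injective f
  adj : ∀ n, G.Adj (f n) (f (n + 1))

/-- Two rays are equivalent if no finite vertex set separates them. -/
def RayEquiv {V : Type u} (G : SimpleGraph V) (R R' : GraphRay G) : Prop :=
  ∀ F : Set V, F.Finite →
    ∃ (m n : ℕ) (w : G.Walk (R.f m) (R'.f n)), ∀ x ∈ w.support, x ∉ F

/-- An end of a graph: a (nonempty) equivalence class of rays. -/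
structure GraphEnd {V : Type u} (G : SimpleGraph V) where
  rays : Set (GraphRay G)
  nonempty : rays.Nonempty
  mem_iff : ∀ R ∈ rays, ∀ R', R' ∈ rays ↔ RayEquiv G R R'

/-- A ray has a tail in `B`. -/
def HasTailIn {V : Type u} {G : SimpleGraph V} (R : GraphRay G) (B : Set V) : Prop :=
  ∃ N, ∀ n ≥ N, R.f n ∈ B

/-- The end tangle induced by the end `ω`: all finite-order separations `(A,B)`
such that every ray of `ω` has a tail in `B`. -/
def endTangle {V : Type u} {G : SimpleGraph V} (ω : GraphEnd G) : Set (FinSep G) :=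
  {s | ∀ R ∈ ω.rays, HasTailIn R s.1.B}

/-- `v` dominates the end `ω`: `v` sends infinitely many paths to a ray of `ω`
which pairwise meet only in `v`. -/
def Dominates {V : Type u} (G : SimpleGraph V) (v : V) (ω : GraphEnd G) : Prop :=
  ∃ R ∈ ω.rays, ∃ p : ℕ → (n : ℕ) × G.Walk v (R.f n),
    (∀ i, (p i).2.IsPath) ∧ (Function.Injective fun i => (p i).1) ∧
    ∀ i j, i ≠ j → ∀ x, x ∈ (p i).2.support → x ∈ (p j).2.support → x = v

/-- The end `ω` has (vertex) degree at least `m`: there are `m` pairwise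
disjoint rays belonging to `ω`. -/
def DegGE {V : Type u} (G : SimpleGraph V) (ω : GraphEnd G) (m : ℕ) : Prop :=
  ∃ R : Fin m → GraphRay G, (∀ i, R i ∈ ω.rays) ∧
    ∀ i j, i ≠ j → Disjoint (Set.range (R i).f) (Set.range (R j).f)

/-- At least `n` vertices dominate `ω`. -/
def DomGE {V : Type u} (G : SimpleGraph V) (ω : GraphEnd G) (n : ℕ) : Prop :=
  ∃ D : Finset V, D.card = n ∧ ∀ v ∈ D, Dominates G v ω

/-- `deg(ω) + dom(ω) ≥ k`. -/
def DegDomGE {V : Type u} (G : SimpleGraph V) (ω : GraphEnd G) (k : ℕ) : Prop :=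
  ∃ m n, m + n = k ∧ DegGE G ω m ∧ DomGE G ω n

/-- `T` separates `X` from the end `ω`: every ray of `ω` meeting `X` meets `T`. -/
def SeparatesFromEnd {V : Type u} (G : SimpleGraph V) (X T : Set V) (ω : GraphEnd G) : Prop :=
  ∀ R ∈ ω.rays, (∃ n, R.f n ∈ X) → ∃ n, R.f n ∈ T

/-- `K` is `(<ℵ₀)`-inseparable (apart from the infiniteness requirement): no
finite-order separation separates two of its vertices. -/
def FinInseparable {V : Type u} (G : SimpleGraph V) (K : Set V) : Prop :=
  ∀ s : FinSep G, ∀ x ∈ K, ∀ y ∈ K, ¬(x ∈ s.1.A \ s.1.B ∧ y ∈ s.1.B \ s.1.A)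

/-- An `ℵ₀`-block: a maximal infinite set of vertices no two of which can be
separated by a finite-order separation. -/
def Aleph0Block {V : Type u} (G : SimpleGraph V) (K : Set V) : Prop :=
  K.Infinite ∧ FinInseparable G K ∧
    ∀ K' : Set V, K ⊆ K' → K'.Infinite → FinInseparable G K' → K' = K

namespace TKAux

open Set Cardinal SimpleGraph


variable {V : Type u} (G : SimpleGraph V) (κ : Cardinal.{u}) {ι : Type u} [LinearOrder ι]
variable (e : ι ≃ κ.ord.ToType)

/-- The step type: one step per prospective branch vertex, one per pair. -/
abbrev SS (ι : Type u) [LinearOrder ι] := ι ⊕ {q : ι × ι // q.1 < q.2}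

noncomputable def ρ : SS ι → κ.ord.ToType × ℕ × κ.ord.ToType
  | .inl i => (e i, 0, e i)
  | .inr q => (max (e q.1.1) (e q.1.2), 1, min (e q.1.1) (e q.1.2))

def r (s t : SS ι) : Prop :=
  Prod.Lex (· < ·) (Prod.Lex (· < ·) (· < ·)) (ρ κ e s) (ρ κ e t)

lemma r_wf : WellFounded (r κ e) :=
  InvImage.wf (ρ κ e)
    (WellFounded.prod_lex wellFounded_lt (WellFounded.prod_lex wellFounded_lt wellFounded_lt))

lemma r_trans {s t u : SS ι} (h1 : r κ e s t) (h2 : r κ e t u) : r κ e s u := by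
  rcases Prod.lex_iff.mp h1 with h1 | ⟨h1, h1'⟩ <;>
    rcases Prod.lex_iff.mp h2 with h2 | ⟨h2, h2'⟩
  · exact Prod.lex_iff.mpr (Or.inl (h1.trans h2))
  · exact Prod.lex_iff.mpr (Or.inl (h2 ▸ h1))
  · exact Prod.lex_iff.mpr (Or.inl (h1 ▸ h2))
  · refine Prod.lex_iff.mpr (Or.inr ⟨h1.trans h2, ?_⟩)
    rcases Prod.lex_iff.mp h1' with h3 | ⟨h3, h3'⟩ <;>
      rcases Prod.lex_iff.mp h2' with h4 | ⟨h4, h4'⟩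
    · exact Prod.lex_iff.mpr (Or.inl (h3.trans h4))
    · exact Prod.lex_iff.mpr (Or.inl (h4 ▸ h3))
    · exact Prod.lex_iff.mpr (Or.inl (h3 ▸ h4))
    · exact Prod.lex_iff.mpr (Or.inr ⟨h3.trans h4, h3'.trans h4'⟩)

lemma ρ_inj : Function.Injective (ρ κ e) := by
  rintro (i | q) (j | q') h
  · simp only [ρ, Prod.mk.injEq] at h
    exact congrArg Sum.inl (e.injective h.1)
  · simp only [ρ, Prod.mk.injEq] at h
    exact absurd h.2.1 (by norm_num)
  · simp only [ρ, Prod.mk.injEq] at h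
    exact absurd h.2.1 (by norm_num)
  · simp only [ρ, Prod.mk.injEq] at h
    obtain ⟨h1, -, h2⟩ := h
    have key : (q.1.1 = q'.1.1 ∧ q.1.2 = q'.1.2) ∨ (q.1.1 = q'.1.2 ∧ q.1.2 = q'.1.1) := by
      rcases le_total (e q.1.1) (e q.1.2) with hab | hab <;>
        rcases le_total (e q'.1.1) (e q'.1.2) with hab' | hab'
      · simp only [max_eq_right hab, max_eq_right hab', min_eq_left hab, min_eq_left hab'] at h1 h2
        exact Or.inl ⟨e.injective h2, e.injective h1⟩
      · simp only [max_eq_right hab, max_eq_left hab', min_eq_left hab, min_eq_right hab'] at h1 h2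
        exact Or.inr ⟨e.injective h2, e.injective h1⟩
      · simp only [max_eq_left hab, max_eq_right hab', min_eq_right hab, min_eq_left hab'] at h1 h2
        exact Or.inr ⟨e.injective h1, e.injective h2⟩
      · simp only [max_eq_left hab, max_eq_left hab', min_eq_right hab, min_eq_right hab'] at h1 h2
        exact Or.inl ⟨e.injective h1, e.injective h2⟩
    rcases key with ⟨ha, hb⟩ | ⟨ha, hb⟩
    · exact congrArg Sum.inr (Subtype.ext (Prod.ext ha hb))
    · exact absurd (q.2.trans_le (hb ▸ le_of_lt (ha ▸ q'.2))) (lt_irrefl _)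

lemma lex3 {α β : Type*} [LinearOrder α] (sβ : β → β → Prop)
    (hβ : ∀ x y : β, sβ x y ∨ x = y ∨ sβ y x) (a b : α × β) :
    Prod.Lex (· < ·) sβ a b ∨ a = b ∨ Prod.Lex (· < ·) sβ b a := by
  rcases lt_trichotomy a.1 b.1 with h | h | h
  · exact Or.inl (Prod.lex_iff.mpr (Or.inl h))
  · rcases hβ a.2 b.2 with h2 | h2 | h2
    · exact Or.inl (Prod.lex_iff.mpr (Or.inr ⟨h, h2⟩))
    · exact Or.inr (Or.inl (Prod.ext h h2))
    · exact Or.inr (Or.inr (Prod.lex_iff.mpr (Or.inr ⟨h.symm, h2⟩)))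
  · exact Or.inr (Or.inr (Prod.lex_iff.mpr (Or.inl h)))

lemma r_trichot {s t : SS ι} (h : s ≠ t) : r κ e s t ∨ r κ e t s := by
  have := lex3 (Prod.Lex (· < ·) (· < ·))
    (fun x y => lex3 (· < ·) (fun a b => (lt_trichotomy a b).imp id id) x y)
    (ρ κ e s) (ρ κ e t)
  rcases this with h1 | h1 | h1
  · exact Or.inl h1
  · exact absurd (ρ_inj κ e h1) h
  · exact Or.inr h1

lemma r_left (q : {q : ι × ι // q.1 < q.2}) : r κ e (.inl q.1.1) (.inr q) := by
  rcases lt_or_eq_of_le (le_max_left (e q.1.1) (e q.1.2)) with h | h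
  · exact Prod.lex_iff.mpr (Or.inl h)
  · exact Prod.lex_iff.mpr (Or.inr ⟨h, Prod.lex_iff.mpr (Or.inl one_pos)⟩)

lemma r_right (q : {q : ι × ι // q.1 < q.2}) : r κ e (.inl q.1.2) (.inr q) := by
  rcases lt_or_eq_of_le (le_max_right (e q.1.1) (e q.1.2)) with h | h
  · exact Prod.lex_iff.mpr (Or.inl h)
  · exact Prod.lex_iff.mpr (Or.inr ⟨h, Prod.lex_iff.mpr (Or.inl one_pos)⟩)

lemma card_seg (hκ : ℵ₀ ≤ κ) (t : SS ι) : #{s : SS ι // r κ e s t} < κ := by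
  set m := (ρ κ e t).1 with hm
  have hIic : #(Set.Iic m) < κ := by
    rw [← Set.Iio_insert]
    exact lt_of_le_of_lt mk_insert_le
      (add_lt_of_lt hκ (mk_Iio_ord_toType m) (one_lt_aleph0.trans_le hκ))
  have hle : ∀ s : {s : SS ι // r κ e s t}, (ρ κ e s.1).1 ≤ m := by
    rintro ⟨s, hs⟩
    rcases Prod.lex_iff.mp hs with h | ⟨h, -⟩
    · exact h.le
    · exact h.le
  let f : {s : SS ι // r κ e s t} → (Set.Iic m) ⊕ (Set.Iic m × Set.Iic m) := fun s =>
    match s with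
    | ⟨.inl i, hs⟩ => .inl ⟨e i, hle ⟨.inl i, hs⟩⟩
    | ⟨.inr q, hs⟩ => .inr (⟨e q.1.1, le_trans (le_max_left _ _) (hle ⟨.inr q, hs⟩)⟩,
        ⟨e q.1.2, le_trans (le_max_right _ _) (hle ⟨.inr q, hs⟩)⟩)
  have hf : Function.Injective f := by
    rintro ⟨(i | q), hs⟩ ⟨(j | q'), ht⟩ h
    · simp only [f, Sum.inl.injEq, Subtype.mk.injEq] at h
      exact Subtype.ext (congrArg Sum.inl (e.injective (congrArg Subtype.val h)))
    · exact absurd h (by simp [f])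
    · exact absurd h (by simp [f])
    · simp only [f, Sum.inr.injEq, Prod.mk.injEq, Subtype.mk.injEq] at h
      exact Subtype.ext (congrArg Sum.inr (Subtype.ext
        (Prod.ext (e.injective (congrArg Subtype.val h.1)) (e.injective (congrArg Subtype.val h.2)))))
  calc #{s : SS ι // r κ e s t} ≤ #((Set.Iic m) ⊕ (Set.Iic m × Set.Iic m)) :=
        mk_le_of_injective hf
    _ = #(Set.Iic m) + #(Set.Iic m) * #(Set.Iic m) := by simp [mk_sum, mk_prod]
    _ < κ := add_lt_of_lt hκ hIic (mul_lt_of_lt hκ hIic hIic)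

lemma card_iUnion_lt {α σ : Type u} {A : σ → Set α} (hκ : ℵ₀ ≤ κ) (hσ : #σ < κ)
    (hA : ∀ s, (A s).Finite) : #(⋃ s, A s) < κ := by
  rcases eq_or_lt_of_le hκ with h | h
  · rw [← h] at hσ ⊢
    have : Finite σ := lt_aleph0_iff_finite.mp hσ
    exact (Set.finite_iUnion hA).lt_aleph0
  · rcases isEmpty_or_nonempty σ with hσ' | hσ'
    · rw [Set.iUnion_of_empty A]
      simpa using aleph0_pos.trans_le hκ
    · calc #(⋃ s, A s) ≤ #σ * ⨆ s, #(A s) := mk_iUnion_le A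
        _ < κ := mul_lt_of_lt hκ hσ
            (lt_of_le_of_lt (ciSup_le' fun s => ((hA s).lt_aleph0).le) h)



variable (K : Set V)

noncomputable def usedF (t : SS ι) (f : ∀ s, r κ e s t → (x : V) × (y : V) × G.Walk x y) :
    Set V :=
  ⋃ s : {s : SS ι // r κ e s t}, {x | x ∈ (f s.1 s.2).2.2.support}

lemma card_usedF (hκ : ℵ₀ ≤ κ) (t : SS ι)
    (f : ∀ s, r κ e s t → (x : V) × (y : V) × G.Walk x y) :
    #(usedF G κ e t f) < κ :=
  card_iUnion_lt κ hκ (card_seg κ e hκ t) fun s => (f s.1 s.2).2.2.support.finite_toSet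

lemma diff_usedF_nonempty (hκ : ℵ₀ ≤ κ) (hcard : κ ≤ #K) (t : SS ι)
    (f : ∀ s, r κ e s t → (x : V) × (y : V) × G.Walk x y) :
    (K \ usedF G κ e t f).Nonempty := by
  rw [Set.diff_nonempty]
  intro hsub
  exact absurd (hcard.trans (mk_le_mk_of_subset hsub)) (not_le.mpr (card_usedF G κ e hκ t f))

open Classical in
noncomputable def body (hκ : ℵ₀ ≤ κ) (hcard : κ ≤ #K) :
    ∀ t : SS ι, (∀ s, r κ e s t → (x : V) × (y : V) × G.Walk x y) →
      (x : V) × (y : V) × G.Walk x y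
  | .inl _, f =>
    let v := (diff_usedF_nonempty G κ e K hκ hcard _ f).choose
    ⟨v, v, Walk.nil⟩
  | .inr q, f =>
    let x := (f (.inl q.1.1) (r_left κ e q)).1
    let y := (f (.inl q.1.2) (r_right κ e q)).1
    if h : ∃ w : G.Walk x y, w.IsPath ∧ ∀ z ∈ w.support, z ∉ usedF G κ e _ f \ {x, y}
    then ⟨x, y, h.choose⟩ else ⟨x, x, Walk.nil⟩

variable (hκ : ℵ₀ ≤ κ) (hcard : κ ≤ #K)

noncomputable def rec' : SS ι → (x : V) × (y : V) × G.Walk x y :=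
  (r_wf κ e).fix (body G κ e K hκ hcard)

lemma rec'_eq (t : SS ι) : rec' G κ e K hκ hcard t
    = body G κ e K hκ hcard t (fun s _ => rec' G κ e K hκ hcard s) :=
  WellFounded.fix_eq _ _ _

noncomputable def b (i : ι) : V := (rec' G κ e K hκ hcard (.inl i)).1

def supp (t : SS ι) : Set V := {x | x ∈ (rec' G κ e K hκ hcard t).2.2.support}

def used (t : SS ι) : Set V := ⋃ s : {s : SS ι // r κ e s t}, supp G κ e K hκ hcard s

lemma used_eq (t : SS ι) :
    used G κ e K hκ hcard t = usedF G κ e t (fun s _ => rec' G κ e K hκ hcard s) := rfl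

lemma card_used (t : SS ι) : #(used G κ e K hκ hcard t) < κ := by
  rw [used_eq]; exact card_usedF G κ e hκ t _

lemma supp_subset_used {s t : SS ι} (h : r κ e s t) :
    supp G κ e K hκ hcard s ⊆ used G κ e K hκ hcard t :=
  fun x hx => Set.mem_iUnion.mpr ⟨⟨s, h⟩, hx⟩

lemma rec'_inl (i : ι) : rec' G κ e K hκ hcard (.inl i) =
    ⟨(diff_usedF_nonempty G κ e K hκ hcard (.inl i)
        (fun s _ => rec' G κ e K hκ hcard s)).choose,
      (diff_usedF_nonempty G κ e K hκ hcard (.inl i)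
        (fun s _ => rec' G κ e K hκ hcard s)).choose, Walk.nil⟩ := by
  rw [rec'_eq]; rfl

lemma b_spec (i : ι) : b G κ e K hκ hcard i ∈ K \ used G κ e K hκ hcard (.inl i) := by
  show (rec' G κ e K hκ hcard (.inl i)).1 ∈ _
  rw [rec'_inl]
  exact (diff_usedF_nonempty G κ e K hκ hcard (.inl i)
    (fun s _ => rec' G κ e K hκ hcard s)).choose_spec

lemma supp_inl (i : ι) : supp G κ e K hκ hcard (.inl i) = {b G κ e K hκ hcard i} := by
  show {x | x ∈ (rec' G κ e K hκ hcard (.inl i)).2.2.support}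
      = {(rec' G κ e K hκ hcard (.inl i)).1}
  rw [rec'_inl]
  ext x
  simp

lemma b_mem_supp (i : ι) : b G κ e K hκ hcard i ∈ supp G κ e K hκ hcard (.inl i) := by
  rw [supp_inl]; rfl

lemma b_inj : Function.Injective (b G κ e K hκ hcard) := by
  intro i j hij
  by_contra hne
  have hst : (Sum.inl i : SS ι) ≠ .inl j := fun h => hne (Sum.inl.inj h)
  rcases r_trichot κ e hst with h | h
  · have : b G κ e K hκ hcard i ∈ used G κ e K hκ hcard (.inl j) :=
      supp_subset_used G κ e K hκ hcard h (b_mem_supp G κ e K hκ hcard i)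
    rw [hij] at this
    exact (b_spec G κ e K hκ hcard j).2 this
  · have : b G κ e K hκ hcard j ∈ used G κ e K hκ hcard (.inl i) :=
      supp_subset_used G κ e K hκ hcard h (b_mem_supp G κ e K hκ hcard j)
    rw [← hij] at this
    exact (b_spec G κ e K hκ hcard i).2 this

lemma exists_walk
    (hinsep : ∀ x ∈ K, ∀ y ∈ K, x ≠ y → ∀ F : Set V, Cardinal.mk ↥F < κ →
      x ∉ F → y ∉ F → ∃ w : G.Walk x y, ∀ z ∈ w.support, z ∉ F)
    (q : {q : ι × ι // q.1 < q.2}) :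
    ∃ w : G.Walk (b G κ e K hκ hcard q.1.1) (b G κ e K hκ hcard q.1.2), w.IsPath ∧
      ∀ z ∈ w.support, z ∉ used G κ e K hκ hcard (.inr q)
        \ {b G κ e K hκ hcard q.1.1, b G κ e K hκ hcard q.1.2} := by
  classical
  obtain ⟨w, hw⟩ := hinsep _ (b_spec G κ e K hκ hcard q.1.1).1 _
    (b_spec G κ e K hκ hcard q.1.2).1
    (fun h => absurd (b_inj G κ e K hκ hcard h) (ne_of_lt q.2))
    (used G κ e K hκ hcard (.inr q)
        \ {b G κ e K hκ hcard q.1.1, b G κ e K hκ hcard q.1.2})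
    (lt_of_le_of_lt (mk_le_mk_of_subset Set.diff_subset) (card_used G κ e K hκ hcard _))
    (by simp) (by simp)
  exact ⟨w.bypass, w.bypass_isPath, fun z hz => hw z (w.support_bypass_subset hz)⟩

lemma rec'_inr
    (hinsep : ∀ x ∈ K, ∀ y ∈ K, x ≠ y → ∀ F : Set V, Cardinal.mk ↥F < κ →
      x ∉ F → y ∉ F → ∃ w : G.Walk x y, ∀ z ∈ w.support, z ∉ F)
    (q : {q : ι × ι // q.1 < q.2}) :
    rec' G κ e K hκ hcard (.inr q) = ⟨b G κ e K hκ hcard q.1.1, b G κ e K hκ hcard q.1.2,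
      (exists_walk G κ e K hκ hcard hinsep q).choose⟩ := by
  rw [rec'_eq]
  exact dif_pos (exists_walk G κ e K hκ hcard hinsep q)

variable (hinsep : ∀ x ∈ K, ∀ y ∈ K, x ≠ y → ∀ F : Set V, Cardinal.mk ↥F < κ →
      x ∉ F → y ∉ F → ∃ w : G.Walk x y, ∀ z ∈ w.support, z ∉ F)

include hinsep

lemma src_inr (q : {q : ι × ι // q.1 < q.2}) :
    (rec' G κ e K hκ hcard (.inr q)).1 = b G κ e K hκ hcard q.1.1 := by
  rw [rec'_inr G κ e K hκ hcard hinsep q]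

lemma tgt_inr (q : {q : ι × ι // q.1 < q.2}) :
    (rec' G κ e K hκ hcard (.inr q)).2.1 = b G κ e K hκ hcard q.1.2 := by
  rw [rec'_inr G κ e K hκ hcard hinsep q]

lemma isPath_inr (q : {q : ι × ι // q.1 < q.2}) :
    (rec' G κ e K hκ hcard (.inr q)).2.2.IsPath := by
  rw [rec'_inr G κ e K hκ hcard hinsep q]
  exact (exists_walk G κ e K hκ hcard hinsep q).choose_spec.1

lemma supp_inr (q : {q : ι × ι // q.1 < q.2}) :
    supp G κ e K hκ hcard (.inr q)
      = {x | x ∈ ((exists_walk G κ e K hκ hcard hinsep q).choose).support} := by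
  show {x | x ∈ (rec' G κ e K hκ hcard (.inr q)).2.2.support} = _
  rw [rec'_inr G κ e K hκ hcard hinsep q]

lemma avoid_inr (q : {q : ι × ι // q.1 < q.2}) :
    ∀ z ∈ supp G κ e K hκ hcard (.inr q), z ∉ used G κ e K hκ hcard (.inr q)
      \ {b G κ e K hκ hcard q.1.1, b G κ e K hκ hcard q.1.2} := by
  intro z hz
  rw [supp_inr G κ e K hκ hcard hinsep q] at hz
  exact (exists_walk G κ e K hκ hcard hinsep q).choose_spec.2 z hz

lemma not_mem_range (q : {q : ι × ι // q.1 < q.2}) {z : V}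
    (hz : z ∈ supp G κ e K hκ hcard (.inr q))
    (h1 : z ≠ b G κ e K hκ hcard q.1.1) (h2 : z ≠ b G κ e K hκ hcard q.1.2) (k : ι) :
    z ≠ b G κ e K hκ hcard k := by
  intro hzk
  rcases r_trichot κ e (show (Sum.inl k : SS ι) ≠ .inr q by simp) with h | h
  · have hmem : z ∈ used G κ e K hκ hcard (.inr q) :=
      hzk ▸ supp_subset_used G κ e K hκ hcard h (b_mem_supp G κ e K hκ hcard k)
    exact (avoid_inr G κ e K hκ hcard hinsep q z hz) ⟨hmem, by simp [h1, h2]⟩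
  · exact (b_spec G κ e K hκ hcard k).2
      (hzk ▸ supp_subset_used G κ e K hκ hcard h hz)

lemma cross {q q' : {q : ι × ι // q.1 < q.2}} (h : r κ e (.inr q) (.inr q')) {z : V}
    (hz : z ∈ supp G κ e K hκ hcard (.inr q)) (hz' : z ∈ supp G κ e K hκ hcard (.inr q')) :
    (z = b G κ e K hκ hcard q.1.1 ∨ z = b G κ e K hκ hcard q.1.2) ∧
      (z = b G κ e K hκ hcard q'.1.1 ∨ z = b G κ e K hκ hcard q'.1.2) := by
  have h2 : z = b G κ e K hκ hcard q'.1.1 ∨ z = b G κ e K hκ hcard q'.1.2 := by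
    by_contra hc
    push_neg at hc
    exact (avoid_inr G κ e K hκ hcard hinsep q' z hz')
      ⟨supp_subset_used G κ e K hκ hcard h hz, by simp [hc.1, hc.2]⟩
  refine ⟨?_, h2⟩
  by_contra hc
  push_neg at hc
  rcases h2 with h2 | h2 <;>
    exact (not_mem_range G κ e K hκ hcard hinsep q hz hc.1 hc.2 _) h2

end TKAux

/-- every `(<κ)`-inseparable set of vertices contains the branch
vertices of a subdivision of `K_κ`, for `κ` infinite. -/
theorem inseparable_contains_TK {V : Type u} (G : SimpleGraph V) (κ : Cardinal.{u})
    (hκ : Cardinal.aleph0 ≤ κ) (K : Set V) (hcard : κ ≤ Cardinal.mk ↥K)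
    (hinsep : ∀ x ∈ K, ∀ y ∈ K, x ≠ y → ∀ F : Set V, Cardinal.mk ↥F < κ →
      x ∉ F → y ∉ F → ∃ w : G.Walk x y, ∀ z ∈ w.support, z ∉ F)
    (ι : Type u) [LinearOrder ι] (hι : Cardinal.mk ι = κ) :
    ∃ b : ι → V, Function.Injective b ∧ Set.range b ⊆ K ∧
      ∃ p : ∀ i j : ι, i < j → G.Walk (b i) (b j),
        (∀ i j h, (p i j h).IsPath) ∧
        (∀ i j h, ∀ x ∈ (p i j h).support, x ≠ b i → x ≠ b j → x ∉ Set.range b) ∧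
        (∀ i j h i' j' h', (i, j) ≠ (i', j') →
          ∀ x, x ∈ (p i j h).support → x ∈ (p i' j' h').support →
            (x = b i ∨ x = b j) ∧ (x = b i' ∨ x = b j')) := by
  classical
  open TKAux in
  obtain ⟨e⟩ : Nonempty (ι ≃ κ.ord.ToType) :=
    Cardinal.eq.mp (by rw [hι, Cardinal.mk_toType, Cardinal.card_ord])
  refine ⟨TKAux.b G κ e K hκ hcard, TKAux.b_inj G κ e K hκ hcard, ?_,
    fun i j h => ((TKAux.rec' G κ e K hκ hcard (.inr ⟨(i, j), h⟩)).2.2.copy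
      (TKAux.src_inr G κ e K hκ hcard hinsep ⟨(i, j), h⟩)
      (TKAux.tgt_inr G κ e K hκ hcard hinsep ⟨(i, j), h⟩)), ?_, ?_, ?_⟩
  · rintro _ ⟨i, rfl⟩
    exact (TKAux.b_spec G κ e K hκ hcard i).1
  · intro i j h
    rw [SimpleGraph.Walk.isPath_copy]
    exact TKAux.isPath_inr G κ e K hκ hcard hinsep ⟨(i, j), h⟩
  · intro i j h x hx hxi hxj
    rintro ⟨k, hk⟩
    rw [SimpleGraph.Walk.support_copy] at hx
    exact TKAux.not_mem_range G κ e K hκ hcard hinsep ⟨(i, j), h⟩ hx hxi hxj k hk.symm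
  · intro i j h i' j' h' hne x hx hx'
    rw [SimpleGraph.Walk.support_copy] at hx hx'
    have hqq' : (Sum.inr (⟨(i, j), h⟩ : {q : ι × ι // q.1 < q.2}) : TKAux.SS ι)
        ≠ .inr ⟨(i', j'), h'⟩ := by
      simp only [ne_eq, Sum.inr.injEq, Subtype.mk.injEq]
      exact hne
    rcases TKAux.r_trichot κ e hqq' with hr | hr
    · exact TKAux.cross G κ e K hκ hcard hinsep hr hx hx'
    · exact (TKAux.cross G κ e K hκ hcard hinsep hr hx' hx).symm
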